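/- Let A be the probability distribution obtained by normalizing G_{δ,ε} (with δ < 1, ε < δ/8). Then χ²(A, N(0,1)) ≤ C·(δ/ε)² for an absolute constant C. -/

import Mathlib

open Real MeasureTheory

/-- Standard Gaussian density. -/
noncomputable def stdG (x : ℝ) : ℝ := (Real.sqrt (2 * Real.pi))⁻¹ * Real.exp (-x ^ 2 / 2)

open Classical in
/-- The density of the measure G_{δ,ε}. -/
noncomputable def Gde (δ ε x : ℝ) : ℝ :=
  if ∃ n : ℤ, |x - n * δ| ≤ ε then (δ / (2 * ε)) * stdG x else 0

lemma stdG_pos (x : ℝ) : 0 < stdG x := by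
  unfold stdG
  have h : 0 < Real.sqrt (2 * Real.pi) := Real.sqrt_pos.mpr (by positivity)
  positivity

lemma stdG_integrable : Integrable stdG := by
  have h := (integrable_exp_neg_mul_sq (by norm_num : (0:ℝ) < 1/2)).const_mul
    (Real.sqrt (2 * Real.pi))⁻¹
  convert h using 2 with x
  unfold stdG
  ring_nf

lemma stdG_ge {x : ℝ} (hx : |x| ≤ 2) : stdG 2 ≤ stdG x := by
  unfold stdG
  have h2 := abs_le.mp hx
  have he : Real.exp (-(2:ℝ)^2/2) ≤ Real.exp (-x^2/2) := by
    apply Real.exp_le_exp.mpr; nlinarith [h2.1, h2.2]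
  have hs : (0:ℝ) ≤ (Real.sqrt (2*Real.pi))⁻¹ := by positivity
  exact mul_le_mul_of_nonneg_left he hs

/-- χ²-divergence of the normalized G_{δ,ε} with respect to N(0,1) is O((δ/ε)²). -/
theorem chi_square_A_bound :
    ∃ C : ℝ, 0 < C ∧ ∀ δ ε : ℝ, 0 < δ → δ < 1 → 0 < ε → ε < δ / 8 →
      (∫ x, (Gde δ ε x / (∫ y, Gde δ ε y)) ^ 2 / stdG x) - 1 ≤ C * (δ / ε) ^ 2 := by
  have hG2 : 0 < stdG 2 := stdG_pos 2
  refine ⟨(2 * stdG 2)⁻¹, by positivity, ?_⟩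
  intro δ ε hδ hδ1 hε hε8
  set S : Set ℝ := {x | ∃ n : ℤ, |x - n * δ| ≤ ε} with hSdef
  have hSeq : S = ⋃ n : ℤ, Set.Icc ((n:ℝ) * δ - ε) ((n:ℝ) * δ + ε) := by
    ext x
    simp only [hSdef, Set.mem_setOf_eq, Set.mem_iUnion, Set.mem_Icc, abs_le]
    constructor
    · rintro ⟨n, h1, h2⟩; exact ⟨n, by linarith, by linarith⟩
    · rintro ⟨n, h1, h2⟩; exact ⟨n, by linarith, by linarith⟩
  have hS : MeasurableSet S := hSeq ▸ MeasurableSet.iUnion fun n => measurableSet_Icc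
  set c := δ / (2 * ε) with hcdef
  have hc : 0 < c := by positivity
  have hGde : ∀ x, Gde δ ε x = S.indicator (fun x => c * stdG x) x := by
    intro x
    by_cases hx : ∃ n : ℤ, |x - n * δ| ≤ ε
    · simp only [Gde]; rw [if_pos hx, Set.indicator_of_mem (show x ∈ S from hx)]
    · simp only [Gde]; rw [if_neg hx, Set.indicator_of_notMem (show x ∉ S from hx)]
  set μ := ∫ x in S, stdG x with hμdef
  -- lower bound for μ
  set N := ⌈1/δ⌉₊ with hNdef
  have hN : 1/δ ≤ (N : ℝ) := Nat.le_ceil _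
  have hNlt : (N : ℝ) < 1/δ + 1 := Nat.ceil_lt_add_one (by positivity)
  set I : ℕ → Set ℝ := fun n => Set.Icc ((n:ℝ) * δ - ε) ((n:ℝ) * δ + ε) with hIdef
  have hIO : ∀ n : ℕ, IntegrableOn stdG (I n) := fun n => stdG_integrable.integrableOn
  have hsub : (⋃ n ∈ Finset.range N, I n) ⊆ S := by
    intro x hx
    simp only [Set.mem_iUnion] at hx
    obtain ⟨n, _, h1, h2⟩ := hx
    exact ⟨(n : ℤ), by push_cast; rw [abs_le]; constructor <;> linarith⟩
  have hdisj : (↑(Finset.range N) : Set ℕ).PairwiseDisjoint I := by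
    intro m hm n hn hmn
    apply Set.disjoint_left.mpr
    intro x hx1 hx2
    obtain ⟨a1, b1⟩ := hx1
    obtain ⟨a2, b2⟩ := hx2
    rcases lt_or_gt_of_ne hmn with h | h
    · have : (m:ℝ) + 1 ≤ (n:ℝ) := by exact_mod_cast h
      nlinarith
    · have : (n:ℝ) + 1 ≤ (m:ℝ) := by exact_mod_cast h
      nlinarith
  have hUnion : ∫ x in ⋃ n ∈ Finset.range N, I n, stdG x
      = ∑ n ∈ Finset.range N, ∫ x in I n, stdG x :=
    integral_biUnion_finset _ (fun n _ => measurableSet_Icc) hdisj (fun n _ => hIO n)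
  have hI_ge : ∀ n ∈ Finset.range N, 2 * ε * stdG 2 ≤ ∫ x in I n, stdG x := by
    intro n hn
    have hn' : (n : ℝ) * δ < 1 := by
      have h1 : (n : ℝ) + 1 ≤ N := by exact_mod_cast Finset.mem_range.mp hn
      have h2 : (n : ℝ) < 1/δ := by linarith
      calc (n:ℝ) * δ < (1/δ) * δ := by apply mul_lt_mul_of_pos_right h2 hδ
        _ = 1 := by field_simp
    have hmono : ∀ x ∈ I n, stdG 2 ≤ stdG x := by
      intro x hx
      obtain ⟨h1, h2⟩ := hx
      apply stdG_ge
      rw [abs_le]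
      have hn0 : (0:ℝ) ≤ (n:ℝ) * δ := by positivity
      constructor <;> nlinarith
    have hconst : ∫ x in I n, stdG 2 = 2 * ε * stdG 2 := by
      rw [setIntegral_const, measureReal_def, Real.volume_Icc]
      rw [ENNReal.toReal_ofReal (by linarith)]
      rw [smul_eq_mul]; ring
    calc 2 * ε * stdG 2 = ∫ x in I n, stdG 2 := hconst.symm
      _ ≤ ∫ x in I n, stdG x := by
          apply setIntegral_mono_on ((integrableOn_const_iff (C := stdG 2)).mpr (by right; rw [Real.volume_Icc]; exact ENNReal.ofReal_lt_top))
            (hIO n) measurableSet_Icc hmono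
  have hμ_lb : 2 * stdG 2 * (ε / δ) ≤ μ := by
    have hsum : (N : ℝ) * (2 * ε * stdG 2) ≤ ∑ n ∈ Finset.range N, ∫ x in I n, stdG x := by
      calc (N : ℝ) * (2 * ε * stdG 2) = ∑ _n ∈ Finset.range N, 2 * ε * stdG 2 := by
            rw [Finset.sum_const, Finset.card_range]; ring
        _ ≤ _ := Finset.sum_le_sum hI_ge
    have hmonoset : ∫ x in ⋃ n ∈ Finset.range N, I n, stdG x ≤ μ := by
      apply setIntegral_mono_set stdG_integrable.integrableOn
        (Filter.Eventually.of_forall fun x => (stdG_pos x).le)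
        (HasSubset.Subset.eventuallyLE hsub)
    have h1 : 2 * stdG 2 * (ε / δ) ≤ (N : ℝ) * (2 * ε * stdG 2) := by
      have : 1/δ * (2 * ε * stdG 2) ≤ (N : ℝ) * (2 * ε * stdG 2) := by
        apply mul_le_mul_of_nonneg_right hN (by positivity)
      calc 2 * stdG 2 * (ε / δ) = 1/δ * (2 * ε * stdG 2) := by ring
        _ ≤ _ := this
    linarith [hUnion ▸ hmonoset]
  have hμpos : 0 < μ := lt_of_lt_of_le (by positivity) hμ_lb
  -- compute the integrals
  have hIμ : ∫ y, Gde δ ε y = c * μ := by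
    simp only [hGde]
    rw [integral_indicator hS, integral_const_mul]
  have hmain : (fun x => (Gde δ ε x / (c * μ)) ^ 2 / stdG x)
      = S.indicator (fun x => μ⁻¹ ^ 2 * stdG x) := by
    funext x
    by_cases hx : x ∈ S
    · rw [hGde x, Set.indicator_of_mem hx, Set.indicator_of_mem hx]
      have h0 : stdG x ≠ 0 := (stdG_pos x).ne'
      field_simp
    · rw [hGde x, Set.indicator_of_notMem hx, Set.indicator_of_notMem hx]
      simp
  have hval : ∫ x, (Gde δ ε x / (∫ y, Gde δ ε y)) ^ 2 / stdG x = μ⁻¹ := by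
    rw [hIμ]
    rw [show (fun x => (Gde δ ε x / (c * μ)) ^ 2 / stdG x)
        = S.indicator (fun x => μ⁻¹ ^ 2 * stdG x) from hmain]
    rw [integral_indicator hS, integral_const_mul, ← hμdef]
    field_simp
  rw [hval]
  -- final inequality
  have h8 : (8:ℝ) ≤ δ / ε := by
    rw [le_div_iff₀ hε]; linarith
  have hinv : μ⁻¹ ≤ (2 * stdG 2)⁻¹ * (δ / ε) := by
    have h1 : μ⁻¹ ≤ (2 * stdG 2 * (ε / δ))⁻¹ :=
      inv_anti₀ (by positivity) hμ_lb
    have h2 : (2 * stdG 2 * (ε / δ))⁻¹ = (2 * stdG 2)⁻¹ * (δ / ε) := by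
      rw [mul_inv, inv_div]
    linarith [h2 ▸ h1]
  have hC : (0:ℝ) < (2 * stdG 2)⁻¹ := by positivity
  nlinarith [hinv, hC, h8, mul_le_mul_of_nonneg_left h8 hC.le]
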